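/- For every path graph P_n with n ≥ 2 vertices, a two-element set {v1, v2} is a fault-tolerant resolving set of P_n if and only if both v1 and v2 are leaves (endpoints) of the path. -/
import Mathlib


open SimpleGraph

/-- `X` is a resolving set of `G`: every pair of distinct vertices is
distinguished by the distance to some vertex of `X`. -/
def isResolving {V : Type*} (G : SimpleGraph V) (X : Set V) : Prop :=
  ∀ u v : V, u ≠ v → ∃ x ∈ X, G.dist u x ≠ G.dist v x

/-- `X` is a fault-tolerant resolving set of `G`. -/
def isFTResolving {V : Type*} (G : SimpleGraph V) (X : Set V) : Prop :=
  ∀ s ∈ X, isResolving G (X \ {s})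

/-- The fault-tolerant metric dimension of `G`. -/
noncomputable def fdim {V : Type*} (G : SimpleGraph V) : ℕ :=
  sInf {n | ∃ X : Set V, isFTResolving G X ∧ X.ncard = n}


lemma pg_adj_natAbs {n : ℕ} {u v : Fin n} (h : (pathGraph n).Adj u v) :
    ((u : ℤ) - (v : ℤ)).natAbs = 1 := by
  rw [pathGraph_adj] at h
  omega

lemma pg_walk_lb {n : ℕ} {u v : Fin n} (w : (pathGraph n).Walk u v) :
    ((u : ℤ) - (v : ℤ)).natAbs ≤ w.length := by
  induction w with
  | nil => simp
  | @cons a b c h p ih =>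
    have h1 := pg_adj_natAbs h
    simp only [Walk.length_cons]
    omega

lemma pg_walk_ub {n : ℕ} : ∀ (m : ℕ) (u v : Fin n), v.val = u.val + m →
    ∃ w : (pathGraph n).Walk u v, w.length = m
  | 0, u, v, h => by
    have : u = v := Fin.ext (by omega)
    subst this
    exact ⟨Walk.nil, rfl⟩
  | m + 1, u, v, h => by
    have hlt : u.val + 1 < n := by omega
    let u' : Fin n := ⟨u.val + 1, hlt⟩
    have hadj : (pathGraph n).Adj u u' := pathGraph_adj.mpr (Or.inl rfl)
    obtain ⟨w, hw⟩ := pg_walk_ub m u' v (by simp only [u']; omega)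
    exact ⟨Walk.cons hadj w, by simp [hw]⟩

lemma pathGraph_dist_eq {n : ℕ} (u v : Fin n) :
    (pathGraph n).dist u v = ((u : ℤ) - (v : ℤ)).natAbs := by
  rcases le_total u.val v.val with hle | hle
  · obtain ⟨w, hw⟩ := pg_walk_ub (v.val - u.val) u v (by omega)
    refine le_antisymm ?_ ?_
    · have := SimpleGraph.dist_le w
      omega
    · obtain ⟨p, hp⟩ := (w.reachable).exists_walk_length_eq_dist
      have := pg_walk_lb p
      omega
  · obtain ⟨w, hw⟩ := pg_walk_ub (u.val - v.val) v u (by omega)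
    refine le_antisymm ?_ ?_
    · have := SimpleGraph.dist_le w.reverse
      rw [Walk.length_reverse] at this
      omega
    · obtain ⟨p, hp⟩ := (w.reverse.reachable).exists_walk_length_eq_dist
      have := pg_walk_lb p
      omega

lemma resolving_singleton_iff {n : ℕ} (hn : 2 ≤ n) (x : Fin n) :
    isResolving (pathGraph n) {x} ↔ x.val = 0 ∨ x.val = n - 1 := by
  constructor
  · intro hres
    by_contra hc
    push_neg at hc
    obtain ⟨h0, h1⟩ := hc
    have hx1 : 1 ≤ x.val := by omega
    have hx2 : x.val + 1 < n := by omega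
    set a : Fin n := ⟨x.val - 1, by omega⟩ with ha
    set b : Fin n := ⟨x.val + 1, hx2⟩ with hb
    have hab : a ≠ b := by
      intro h
      have := Fin.val_eq_val a b |>.mpr h
      simp [ha, hb] at this
    obtain ⟨y, hy, hne⟩ := hres a b hab
    rcases hy with rfl
    rw [pathGraph_dist_eq, pathGraph_dist_eq] at hne
    simp only [ha, hb] at hne
    apply hne
    congr 1
    omega
  · intro h u v huv
    refine ⟨x, rfl, ?_⟩
    rw [pathGraph_dist_eq, pathGraph_dist_eq]
    have : u.val ≠ v.val := fun h => huv (Fin.ext h)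
    have hu := u.isLt
    have hv := v.isLt
    rcases h with h | h <;> omega

lemma leaf_iff {n : ℕ} (hn : 2 ≤ n) (v : Fin n) :
    ((pathGraph n).neighborSet v).ncard = 1 ↔ v.val = 0 ∨ v.val = n - 1 := by
  constructor
  · intro h
    by_contra hc
    push_neg at hc
    obtain ⟨h0, h1⟩ := hc
    have hv2 : v.val + 1 < n := by omega
    obtain ⟨a, ha⟩ := Set.ncard_eq_one.mp h
    have hm : (⟨v.val - 1, by omega⟩ : Fin n) ∈ (pathGraph n).neighborSet v := by
      rw [mem_neighborSet, pathGraph_adj]; simp; omega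
    have hp : (⟨v.val + 1, hv2⟩ : Fin n) ∈ (pathGraph n).neighborSet v := by
      rw [mem_neighborSet, pathGraph_adj]; simp
    rw [ha] at hm hp
    simp only [Set.mem_singleton_iff] at hm hp
    have := congrArg Fin.val (hm.trans hp.symm)
    simp at this
  · intro h
    rcases h with h | h
    · have : (pathGraph n).neighborSet v = {⟨1, by omega⟩} := by
        ext w
        rw [mem_neighborSet, pathGraph_adj]
        simp [Fin.ext_iff]
        omega
      rw [this, Set.ncard_singleton]
    · have : (pathGraph n).neighborSet v = {⟨n - 2, by omega⟩} := by
        ext w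
        rw [mem_neighborSet, pathGraph_adj]
        have := w.isLt
        simp [Fin.ext_iff]
        omega
      rw [this, Set.ncard_singleton]

/-- For `P_n` with `n ≥ 2`, a two-element set `{v1, v2}` is a fault-tolerant
resolving set iff both `v1` and `v2` are leaves (vertices of degree 1). -/
theorem ftResolving_pathGraph_pair_iff (n : ℕ) (hn : 2 ≤ n) (v1 v2 : Fin n)
    (hne : v1 ≠ v2) :
    isFTResolving (SimpleGraph.pathGraph n) {v1, v2} ↔
      ((SimpleGraph.pathGraph n).neighborSet v1).ncard = 1 ∧
      ((SimpleGraph.pathGraph n).neighborSet v2).ncard = 1 := by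
  have h1 : ({v1, v2} : Set (Fin n)) \ {v1} = {v2} := by
    ext w; simp; intro h; subst h; tauto
  have h2 : ({v1, v2} : Set (Fin n)) \ {v2} = {v1} := by
    ext w; simp; constructor
    · rintro ⟨h | h, h'⟩ <;> tauto
    · rintro rfl; exact ⟨Or.inl rfl, hne⟩
  rw [leaf_iff hn, leaf_iff hn]
  constructor
  · intro hft
    constructor
    · have := hft v2 (Or.inr rfl)
      rw [h2] at this
      exact (resolving_singleton_iff hn v1).mp this
    · have := hft v1 (Or.inl rfl)
      rw [h1] at this
      exact (resolving_singleton_iff hn v2).mp this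
  · rintro ⟨hl1, hl2⟩ s hs
    rcases hs with rfl | rfl
    · rw [h1]; exact (resolving_singleton_iff hn v2).mpr hl2
    · rw [h2]; exact (resolving_singleton_iff hn v1).mpr hl1
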